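/- (Sharpness of the rational enclosure bound.) Let p and q be polynomials in n variables of degree ≤ k with Bernstein coefficients b_α(p,k,Δ), b_α(q,k,Δ) on the standard simplex Δ, with b_α(q,k,Δ) > 0 for all |α| = k. Let f = p/q, b_α(f,k,Δ) = b_α(p,k,Δ)/b_α(q,k,Δ), and M^{(k)} = max_{|α|=k} b_α(f,k,Δ). Then max_{x ∈ Δ} f(x) = M^{(k)} if and only if M^{(k)} = b_{k·eᵢ}(f,k,Δ) for some vertex multi-index k·eᵢ, i ∈ {0,1,…,n}. The analogous statement holds for the minimum: min_{x ∈ Δ} f(x) = min_{|α|=k} b_α(f,k,Δ) if and only if the minimum coefficient is attained at some vertex multi-index. -/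
import Mathlib


open Finset

noncomputable section

/-- The standard simplex Δ in ℝⁿ. -/
def stdSimp (n : ℕ) : Set (Fin n → ℝ) :=
  {x | (∀ i, 0 ≤ x i) ∧ ∑ i, x i ≤ 1}

/-- Multi-indices α ∈ ℕ^{n+1} with |α| = k. -/
def multIdx (n k : ℕ) : Finset (Fin (n+1) → ℕ) :=
  Finset.Nat.antidiagonalTuple (n+1) k

lemma multIdx_nonempty (n k : ℕ) : (multIdx n k).Nonempty :=
  ⟨fun i => if i = 0 then k else 0, by
    simp [multIdx, Finset.Nat.mem_antidiagonalTuple]⟩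

/-- Bernstein basis polynomial of degree k on the standard simplex. -/
def bern (n k : ℕ) (α : Fin (n+1) → ℕ) (x : Fin n → ℝ) : ℝ :=
  ((k.factorial : ℝ) / ∏ i, ((α i).factorial : ℝ)) *
    (∏ i : Fin n, x i ^ α i.succ) * (1 - ∑ i, x i) ^ α 0

/-- i-th standard unit multi-index. -/
def unitIdx (n : ℕ) (i : Fin (n+1)) : Fin (n+1) → ℕ :=
  fun j => if j = i then 1 else 0

/-- vertex multi-index k·eᵢ -/
def vertIdx (n k : ℕ) (i : Fin (n+1)) : Fin (n+1) → ℕ :=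
  fun j => if j = i then k else 0

/-- second difference -/
def secondDiff (n : ℕ) (b : (Fin (n+1) → ℕ) → ℝ) (γ : Fin (n+1) → ℕ)
    (i j : Fin (n+1)) : ℝ :=
  b (γ + unitIdx n i + unitIdx n (j - 1)) + b (γ + unitIdx n (i - 1) + unitIdx n j)
    - b (γ + unitIdx n (i - 1) + unitIdx n (j - 1)) - b (γ + unitIdx n i + unitIdx n j)

lemma vertIdx_mem (n k : ℕ) (i : Fin (n+1)) : vertIdx n k i ∈ multIdx n k := by
  simp [multIdx, Finset.Nat.mem_antidiagonalTuple, vertIdx, Finset.sum_ite_eq']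

lemma prod_factorial_vertIdx (n k : ℕ) (i : Fin (n+1)) :
    (∏ j, (((vertIdx n k i) j).factorial : ℝ)) = (k.factorial : ℝ) := by
  have : ∀ j, (((vertIdx n k i) j).factorial : ℝ) = if j = i then (k.factorial : ℝ) else 1 := by
    intro j; simp [vertIdx, apply_ite Nat.factorial]
  simp [this, Finset.prod_ite_eq']

lemma bern_vert_zero (n k : ℕ) (x : Fin n → ℝ) :
    bern n k (vertIdx n k 0) x = (1 - ∑ i, x i) ^ k := by
  have h1 : (∏ i : Fin n, x i ^ (vertIdx n k 0) i.succ) = 1 := by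
    apply Finset.prod_eq_one; intro j _; simp [vertIdx, Fin.succ_ne_zero]
  rw [bern, prod_factorial_vertIdx, h1]
  have : (vertIdx n k 0) 0 = k := by simp [vertIdx]
  rw [this, div_self (by positivity), one_mul, one_mul]

lemma bern_vert_succ (n k : ℕ) (m : Fin n) (x : Fin n → ℝ) :
    bern n k (vertIdx n k m.succ) x = x m ^ k := by
  have h1 : (∏ i : Fin n, x i ^ (vertIdx n k m.succ) i.succ) = x m ^ k := by
    have : ∀ j : Fin n, x j ^ (vertIdx n k m.succ) j.succ = if j = m then x m ^ k else 1 := by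
      intro j
      by_cases h : j = m <;> simp [vertIdx, h, Fin.succ_inj]
    simp [this, Finset.prod_ite_eq']
  have h2 : (vertIdx n k m.succ) 0 = 0 := by simp [vertIdx, (Fin.succ_ne_zero m).symm]
  rw [bern, prod_factorial_vertIdx, h1, h2, div_self (by positivity), one_mul, pow_zero, mul_one]

lemma bern_nonneg (n k : ℕ) (α : Fin (n+1) → ℕ) {x : Fin n → ℝ} (hx : x ∈ stdSimp n) :
    0 ≤ bern n k α x := by
  obtain ⟨h0, h1⟩ := hx
  have : 0 ≤ 1 - ∑ i, x i := by linarith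
  apply mul_nonneg (mul_nonneg (by positivity) _) (by positivity)
  exact Finset.prod_nonneg fun j _ => pow_nonneg (h0 j) _

lemma exists_vert_bern_pos (n k : ℕ) {x : Fin n → ℝ} (hx : x ∈ stdSimp n) :
    ∃ i : Fin (n+1), 0 < bern n k (vertIdx n k i) x := by
  obtain ⟨h0, h1⟩ := hx
  rcases lt_or_eq_of_le h1 with h | h
  · exact ⟨0, by rw [bern_vert_zero]; exact pow_pos (by linarith) _⟩
  · have : ∃ m, 0 < x m := by
      by_contra hcon
      push_neg at hcon
      have : ∑ i, x i = 0 := le_antisymm (Finset.sum_nonpos fun i _ => hcon i)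
        (Finset.sum_nonneg fun i _ => h0 i)
      rw [this] at h; norm_num at h
    obtain ⟨m, hm⟩ := this
    exact ⟨m.succ, by rw [bern_vert_succ]; exact pow_pos hm _⟩

/-- vertex point of the simplex -/
def vertPt (n : ℕ) (i : Fin (n+1)) : Fin n → ℝ := fun j => if j.succ = i then 1 else 0

lemma sum_vertPt (n : ℕ) (i : Fin (n+1)) : ∑ j, vertPt n i j = if i = 0 then 0 else 1 := by
  induction i using Fin.cases with
  | zero => simp [vertPt, Fin.succ_ne_zero]
  | succ m => simp [vertPt, Fin.succ_inj, Finset.sum_ite_eq', (Fin.succ_ne_zero m)]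

lemma vertPt_mem (n : ℕ) (i : Fin (n+1)) : vertPt n i ∈ stdSimp n := by
  constructor
  · intro j; dsimp only [vertPt]; split <;> norm_num
  · rw [sum_vertPt]; split <;> norm_num

lemma bern_vertIdx_vertPt (n k : ℕ) (i : Fin (n+1)) :
    bern n k (vertIdx n k i) (vertPt n i) = 1 := by
  induction i using Fin.cases with
  | zero => rw [bern_vert_zero, sum_vertPt]; norm_num
  | succ m => rw [bern_vert_succ]; simp [vertPt]

lemma bern_vertPt (n k : ℕ) (α : Fin (n+1) → ℕ) (hα : α ∈ multIdx n k) (i : Fin (n+1)) :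
    bern n k α (vertPt n i) = if α = vertIdx n k i then 1 else 0 := by
  have hsum : ∑ j, α j = k := by
    simpa [multIdx, Finset.Nat.mem_antidiagonalTuple] using hα
  by_cases h : α = vertIdx n k i
  · rw [h, bern_vertIdx_vertPt]; simp
  · rw [if_neg h]
    have hj : ∃ j, j ≠ i ∧ α j ≠ 0 := by
      by_contra hcon
      push_neg at hcon
      apply h
      funext j
      by_cases hji : j = i
      · subst hji
        have : ∑ j', α j' = α j := Finset.sum_eq_single j
          (fun j' _ hne => hcon j' hne) (by simp)
        simp [vertIdx, ← hsum, this]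
      · simp [vertIdx, hji, hcon j hji]
    obtain ⟨j, hji, hj0⟩ := hj
    rcases Fin.eq_zero_or_eq_succ j with hj' | ⟨m, hj'⟩
    · subst hj'
      have hi0 : i ≠ 0 := fun hh => hji hh.symm
      have : (1 - ∑ j', vertPt n i j') ^ α 0 = 0 := by
        rw [sum_vertPt, if_neg hi0]
        rw [show (1:ℝ) - 1 = 0 by ring]
        exact zero_pow hj0
      rw [bern, this, mul_zero]
    · subst hj'
      have : (∏ j' : Fin n, vertPt n i j' ^ α j'.succ) = 0 := by
        apply Finset.prod_eq_zero (Finset.mem_univ m)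
        have hv : vertPt n i m = 0 := by simp [vertPt, hji]
        rw [hv]
        exact zero_pow hj0
      rw [bern, this, mul_zero, zero_mul]

lemma isCompact_stdSimp (n : ℕ) : IsCompact (stdSimp n) := by
  have hclosed : IsClosed (stdSimp n) := by
    have : stdSimp n = (⋂ i, {x : Fin n → ℝ | 0 ≤ x i}) ∩ {x : Fin n → ℝ | ∑ i, x i ≤ 1} := by
      ext x; simp [stdSimp, Set.mem_iInter]
    rw [this]
    exact IsClosed.inter
      (isClosed_iInter fun i => isClosed_le continuous_const (continuous_apply i))
      (isClosed_le (by continuity) continuous_const)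
  have hsub : stdSimp n ⊆ Set.Icc (0 : Fin n → ℝ) 1 := by
    rintro x ⟨h0, h1⟩
    refine ⟨fun i => h0 i, fun i => ?_⟩
    calc x i ≤ ∑ j, x j := Finset.single_le_sum (fun j _ => h0 j) (Finset.mem_univ i)
    _ ≤ 1 := h1
  exact IsCompact.of_isClosed_subset isCompact_Icc hclosed hsub

lemma continuous_bern (n k : ℕ) (α : Fin (n+1) → ℕ) : Continuous (bern n k α) := by
  unfold bern
  exact ((continuous_const.mul
    (continuous_finset_prod _ fun i _ => (continuous_apply i).pow _)).mul
    ((continuous_const.sub (by continuity)).pow _))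

section main
variable {n k : ℕ} {p q : (Fin n → ℝ) → ℝ} {b c : (Fin (n+1) → ℕ) → ℝ}

lemma q_pos (hrepq : ∀ x, q x = ∑ α ∈ multIdx n k, c α * bern n k α x)
    (hc : ∀ α ∈ multIdx n k, 0 < c α) {x : Fin n → ℝ} (hx : x ∈ stdSimp n) : 0 < q x := by
  rw [hrepq]
  obtain ⟨i, hi⟩ := exists_vert_bern_pos n k hx
  exact Finset.sum_pos'
    (fun α hα => mul_nonneg (hc α hα).le (bern_nonneg n k α hx))
    ⟨vertIdx n k i, vertIdx_mem n k i, mul_pos (hc _ (vertIdx_mem n k i)) hi⟩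

lemma f_vertPt (hrepp : ∀ x, p x = ∑ α ∈ multIdx n k, b α * bern n k α x) (i : Fin (n+1)) :
    p (vertPt n i) = b (vertIdx n k i) := by
  rw [hrepp]
  rw [Finset.sum_congr rfl (fun α hα => by rw [bern_vertPt n k α hα i])]
  simp [Finset.sum_ite_eq', vertIdx_mem n k i]

/-- upper enclosure -/
lemma upper_bound (hrepp : ∀ x, p x = ∑ α ∈ multIdx n k, b α * bern n k α x)
    (hrepq : ∀ x, q x = ∑ α ∈ multIdx n k, c α * bern n k α x)
    (hc : ∀ α ∈ multIdx n k, 0 < c α) {x : Fin n → ℝ} (hx : x ∈ stdSimp n) :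
    p x / q x ≤ (multIdx n k).sup' (multIdx_nonempty n k) (fun α => b α / c α) := by
  set M := (multIdx n k).sup' (multIdx_nonempty n k) (fun α => b α / c α) with hM
  rw [div_le_iff₀ (q_pos hrepq hc hx), hrepp, hrepq, Finset.mul_sum]
  refine Finset.sum_le_sum fun α hα => ?_
  have h1 : b α ≤ M * c α := by
    have := Finset.le_sup' (fun α => b α / c α) hα
    rw [div_le_iff₀ (hc α hα)] at this
    exact this
  calc b α * bern n k α x ≤ (M * c α) * bern n k α x :=
        mul_le_mul_of_nonneg_right h1 (bern_nonneg n k α hx)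
    _ = M * (c α * bern n k α x) := by ring

lemma sup_half (hrepp : ∀ x, p x = ∑ α ∈ multIdx n k, b α * bern n k α x)
    (hrepq : ∀ x, q x = ∑ α ∈ multIdx n k, c α * bern n k α x)
    (hc : ∀ α ∈ multIdx n k, 0 < c α) :
    (sSup ((fun x => p x / q x) '' stdSimp n) =
        (multIdx n k).sup' (multIdx_nonempty n k) (fun α => b α / c α) ↔
      ∃ i : Fin (n+1),
        (multIdx n k).sup' (multIdx_nonempty n k) (fun α => b α / c α) =
          b (vertIdx n k i) / c (vertIdx n k i)) := by
  set M := (multIdx n k).sup' (multIdx_nonempty n k) (fun α => b α / c α) with hM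
  have hqpos : ∀ x ∈ stdSimp n, 0 < q x := fun x hx => q_pos hrepq hc hx
  have hub : ∀ x ∈ stdSimp n, p x / q x ≤ M := fun x hx => upper_bound hrepp hrepq hc hx
  constructor
  · intro hsup
    -- obtain maximizer
    have hcont : ContinuousOn (fun x => p x / q x) (stdSimp n) := by
      have hp : Continuous p := by
        have : p = fun x => ∑ α ∈ multIdx n k, b α * bern n k α x := funext hrepp
        rw [this]
        exact continuous_finset_sum _ fun α _ => continuous_const.mul (continuous_bern n k α)
      have hq : Continuous q := by
        have : q = fun x => ∑ α ∈ multIdx n k, c α * bern n k α x := funext hrepq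
        rw [this]
        exact continuous_finset_sum _ fun α _ => continuous_const.mul (continuous_bern n k α)
      exact (hp.continuousOn).div (hq.continuousOn) (fun x hx => (hqpos x hx).ne')
    have h0mem : (0 : Fin n → ℝ) ∈ stdSimp n := ⟨fun i => le_refl 0, by simp⟩
    obtain ⟨xs, hxs, hmax⟩ :=
      (isCompact_stdSimp n).exists_isMaxOn ⟨0, h0mem⟩ hcont
    have hgreatest : IsGreatest ((fun x => p x / q x) '' stdSimp n) (p xs / q xs) :=
      ⟨Set.mem_image_of_mem _ hxs, by rintro y ⟨x, hx, rfl⟩; exact hmax hx⟩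
    have hfx : p xs / q xs = M := by rw [← hsup, hgreatest.csSup_eq]
    have hpq : p xs = M * q xs := by
      rw [div_eq_iff (hqpos xs hxs).ne'] at hfx
      linarith [hfx]
    have hzero : ∑ α ∈ multIdx n k, (M * c α - b α) * bern n k α xs = 0 := by
      have := hrepp xs
      have h2 := hrepq xs
      simp only [sub_mul, Finset.sum_sub_distrib]
      rw [show ∑ α ∈ multIdx n k, M * c α * bern n k α xs
          = M * ∑ α ∈ multIdx n k, c α * bern n k α xs by
        rw [Finset.mul_sum]; exact Finset.sum_congr rfl fun α _ => by ring]
      rw [← h2, ← this, ← hpq, sub_self]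
    have hterm : ∀ α ∈ multIdx n k, (M * c α - b α) * bern n k α xs = 0 := by
      refine (Finset.sum_eq_zero_iff_of_nonneg ?_).mp hzero
      · intro α hα
        apply mul_nonneg _ (bern_nonneg n k α hxs)
        have := Finset.le_sup' (fun α => b α / c α) hα
        rw [div_le_iff₀ (hc α hα)] at this
        linarith
    obtain ⟨i, hi⟩ := exists_vert_bern_pos n k hxs
    refine ⟨i, ?_⟩
    have h3 := hterm (vertIdx n k i) (vertIdx_mem n k i)
    have h4 : M * c (vertIdx n k i) - b (vertIdx n k i) = 0 := by
      rcases mul_eq_zero.mp h3 with h | h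
      · exact h
      · exact absurd h hi.ne'
    rw [eq_div_iff (hc _ (vertIdx_mem n k i)).ne']
    linarith
  · intro ⟨i, hi⟩
    have hmem : M ∈ (fun x => p x / q x) '' stdSimp n := by
      refine ⟨vertPt n i, vertPt_mem n i, ?_⟩
      show p (vertPt n i) / q (vertPt n i) = M
      rw [f_vertPt hrepp i, f_vertPt hrepq i, ← hi]
    exact IsGreatest.csSup_eq ⟨hmem, by rintro y ⟨x, hx, rfl⟩; exact hub x hx⟩

lemma sup'_neg_div (s : Finset (Fin (n+1) → ℕ)) (hs : s.Nonempty) :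
    s.sup' hs (fun α => -b α / c α) = - s.inf' hs (fun α => b α / c α) := by
  apply le_antisymm
  · apply Finset.sup'_le
    intro α hα
    rw [neg_div, neg_le_neg_iff]
    exact Finset.inf'_le _ hα
  · obtain ⟨α₀, h₀, heq⟩ := Finset.exists_mem_eq_inf' hs (fun α => b α / c α)
    rw [heq, ← neg_div]
    exact Finset.le_sup' (fun α => -b α / c α) h₀

lemma inf_half (hrepp : ∀ x, p x = ∑ α ∈ multIdx n k, b α * bern n k α x)
    (hrepq : ∀ x, q x = ∑ α ∈ multIdx n k, c α * bern n k α x)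
    (hc : ∀ α ∈ multIdx n k, 0 < c α) :
    (sInf ((fun x => p x / q x) '' stdSimp n) =
        (multIdx n k).inf' (multIdx_nonempty n k) (fun α => b α / c α) ↔
      ∃ i : Fin (n+1),
        (multIdx n k).inf' (multIdx_nonempty n k) (fun α => b α / c α) =
          b (vertIdx n k i) / c (vertIdx n k i)) := by
  have hrepp' : ∀ x, (fun x => -p x) x = ∑ α ∈ multIdx n k, (-b α) * bern n k α x := by
    intro x
    simp only
    rw [hrepp x, ← neg_one_mul, Finset.mul_sum]
    exact Finset.sum_congr rfl fun α _ => by ring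
  have key := sup_half (b := fun α => -b α) hrepp' hrepq hc
  have himg : (fun x => -p x / q x) '' stdSimp n = -((fun x => p x / q x) '' stdSimp n) := by
    rw [← Set.image_neg_eq_neg, Set.image_image]
    exact Set.image_congr fun x _ => neg_div _ _
  have hsupneg : sSup ((fun x => -p x / q x) '' stdSimp n) =
      - sInf ((fun x => p x / q x) '' stdSimp n) := by
    rw [himg, show sInf ((fun x => p x / q x) '' stdSimp n)
      = -sSup (-((fun x => p x / q x) '' stdSimp n)) from rfl, neg_neg]
  rw [hsupneg, sup'_neg_div] at key
  constructor
  · intro h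
    obtain ⟨i, hi⟩ := key.mp (by rw [h])
    refine ⟨i, ?_⟩
    simp only [neg_div, neg_inj] at hi
    exact hi
  · intro ⟨i, hi⟩
    have := key.mpr ⟨i, by simp only [neg_div, neg_inj]; exact hi⟩
    linarith [this]
end main


/-- sharpness of the rational enclosure bound. -/
theorem stmt8 (n k : ℕ) (hn : 1 ≤ n)
    (p q : (Fin n → ℝ) → ℝ) (b c : (Fin (n+1) → ℕ) → ℝ)
    (hrepp : ∀ x, p x = ∑ α ∈ multIdx n k, b α * bern n k α x)
    (hrepq : ∀ x, q x = ∑ α ∈ multIdx n k, c α * bern n k α x)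
    (hc : ∀ α ∈ multIdx n k, 0 < c α) :
    (sSup ((fun x => p x / q x) '' stdSimp n) =
        (multIdx n k).sup' (multIdx_nonempty n k) (fun α => b α / c α) ↔
      ∃ i : Fin (n+1),
        (multIdx n k).sup' (multIdx_nonempty n k) (fun α => b α / c α) =
          b (vertIdx n k i) / c (vertIdx n k i)) ∧
    (sInf ((fun x => p x / q x) '' stdSimp n) =
        (multIdx n k).inf' (multIdx_nonempty n k) (fun α => b α / c α) ↔
      ∃ i : Fin (n+1),
        (multIdx n k).inf' (multIdx_nonempty n k) (fun α => b α / c α) =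
          b (vertIdx n k i) / c (vertIdx n k i)) :=
  ⟨sup_half hrepp hrepq hc, inf_half hrepp hrepq hc⟩
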